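/- The dual map of a cellular automaton commutes with shifts: for every shift vector v and every cylinder (or ⊤) α, f̂(σ_v(α)) = σ_v(f̂(α)). -/

import Mathlib

abbrev Cell (d : ℕ) := Fin d → ℤ
abbrev Config (d : ℕ) (S : Type*) := Cell d → S

/-- The shift map `σ_v(x)_u = x_(v+u)`. -/
def shiftMap {d : ℕ} {S : Type*} (v : Cell d) (x : Config d S) : Config d S :=
  fun u => x (v + u)

/-- A cellular automaton: continuous (product topology, `S` discrete) and shift-commuting. -/
def IsCA {d : ℕ} {S : Type*} [TopologicalSpace S] (f : Config d S → Config d S) : Prop :=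
  Continuous f ∧ ∀ v : Cell d, f ∘ shiftMap v = shiftMap v ∘ f

/-- The cylinder of the pattern `p` restricted to domain `D`. -/
def cylinder {d : ℕ} {S : Type*} (D : Set (Cell d)) (p : Cell d → S) : Set (Config d S) :=
  {x | ∀ u ∈ D, x u = p u}

/-- The dual map: intersection of all cylinders (or the empty set)
containing the `f`-preimage of `A`. -/
def dualMap {d : ℕ} {S : Type*} (f : Config d S → Config d S) (A : Set (Config d S)) :
    Set (Config d S) :=
  ⋂₀ {B | ((∃ D p, B = cylinder D p) ∨ B = ∅) ∧ f ⁻¹' A ⊆ B}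

lemma shift_shift {d : ℕ} {S : Type*} (v w : Cell d) (x : Config d S) :
    shiftMap v (shiftMap w x) = shiftMap (w + v) x := by
  funext u
  show x (w + (v + u)) = x (w + v + u)
  rw [add_assoc]

lemma shiftMap_zero {d : ℕ} {S : Type*} (x : Config d S) : shiftMap (0 : Cell d) x = x := by
  funext u; show x (0 + u) = x u; rw [zero_add]

lemma shift_neg_shift {d : ℕ} {S : Type*} (v : Cell d) (x : Config d S) :
    shiftMap (-v) (shiftMap v x) = x := by
  rw [shift_shift, add_neg_cancel, shiftMap_zero]

lemma shift_shift_neg {d : ℕ} {S : Type*} (v : Cell d) (x : Config d S) :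
    shiftMap v (shiftMap (-v) x) = x := by
  rw [shift_shift, neg_add_cancel, shiftMap_zero]

lemma preimage_cylinder {d : ℕ} {S : Type*} (w : Cell d) (D : Set (Cell d)) (p : Cell d → S) :
    shiftMap w ⁻¹' cylinder D p = cylinder ((w + ·) '' D) (fun y => p (-w + y)) := by
  ext x
  simp only [Set.mem_preimage, cylinder, Set.mem_setOf_eq, Set.mem_image]
  constructor
  · rintro h y ⟨u, hu, rfl⟩
    have := h u hu
    simpa [neg_add_cancel_left, shiftMap] using this
  · intro h u hu
    have := h (w + u) ⟨u, hu, rfl⟩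
    rwa [neg_add_cancel_left] at this

lemma preimage_good {d : ℕ} {S : Type*} (w : Cell d) (B : Set (Config d S))
    (hB : (∃ D p, B = cylinder D p) ∨ B = ∅) :
    (∃ D p, shiftMap w ⁻¹' B = cylinder D p) ∨ shiftMap w ⁻¹' B = ∅ := by
  rcases hB with ⟨D, p, rfl⟩ | rfl
  · exact Or.inl ⟨_, _, preimage_cylinder w D p⟩
  · exact Or.inr (by simp)

lemma dual_preimage {d : ℕ} {S : Type*} [TopologicalSpace S]
    (f : Config d S → Config d S) (hf : IsCA f) (w : Cell d) (α : Set (Config d S)) :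
    dualMap f (shiftMap w ⁻¹' α) = shiftMap w ⁻¹' dualMap f α := by
  have hcomm : ∀ x, f (shiftMap w x) = shiftMap w (f x) := fun x => congrFun (hf.2 w) x
  have hpre : f ⁻¹' (shiftMap w ⁻¹' α) = shiftMap w ⁻¹' (f ⁻¹' α) := by
    ext x; simp [Set.mem_preimage, hcomm]
  ext x
  simp only [dualMap, Set.mem_sInter, Set.mem_setOf_eq, Set.mem_preimage]
  constructor
  · rintro h C ⟨hC, hsub⟩
    have := h (shiftMap w ⁻¹' C)
      ⟨preimage_good w C hC, by rw [hpre]; exact Set.preimage_mono hsub⟩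
    exact this
  · rintro h B ⟨hB, hsub⟩
    have hsub' : f ⁻¹' α ⊆ shiftMap (-w) ⁻¹' B := by
      intro y hy
      apply hsub
      show shiftMap w (f (shiftMap (-w) y)) ∈ α
      rw [← hcomm, shift_shift_neg]
      exact hy
    have := h (shiftMap (-w) ⁻¹' B) ⟨preimage_good (-w) B hB, hsub'⟩
    rwa [Set.mem_preimage, shift_neg_shift] at this

lemma image_shift {d : ℕ} {S : Type*} (v : Cell d) (A : Set (Config d S)) :
    shiftMap v '' A = shiftMap (-v) ⁻¹' A := by
  ext x
  constructor
  · rintro ⟨y, hy, rfl⟩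
    rwa [Set.mem_preimage, shift_neg_shift]
  · intro hx
    exact ⟨shiftMap (-v) x, hx, shift_shift_neg v x⟩

/-- The dual map of a cellular automaton commutes with shifts:
`f̂(σ_v(α)) = σ_v(f̂(α))` for every cylinder (or `⊤ = ∅`) `α`. -/
theorem stmt5 {d : ℕ} {S : Type*} [Fintype S] [TopologicalSpace S] [DiscreteTopology S]
    (f : Config d S → Config d S) (hf : IsCA f)
    (v : Cell d) (α : Set (Config d S)) (hα : (∃ D p, α = cylinder D p) ∨ α = ∅) :
    dualMap f (shiftMap v '' α) = shiftMap v '' dualMap f α := by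
  rw [image_shift, image_shift, dual_preimage f hf]
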